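/- Let G be a finite group, M a finitely generated ℤG-module which is torsion-free as a ℤ-module, and m₁, …, m_d ∈ M elements generating a ℤG-submodule U of infinite index in M; assume 𝓜 := M ⊗_ℤ ℚ is d-generated as a ℚG-module. Write 𝓤 := U ⊗_ℤ ℚ and choose a ℚG-module complement 𝓥 with 𝓜 = 𝓤 ⊕ 𝓥; set V := M ∩ 𝓥. Let f : (ℚG)^{(d)} → 𝓜 be the ℚG-homomorphism f(r₁,…,r_d) = Σᵢ rᵢmᵢ, let 𝓛 := ker f and L := 𝓛 ∩ (ℤG)^{(d)}. Then there exist elements h₁, …, h_d ∈ V and a tuple (s₁, …, s_d) ∈ L such that Σ_{i=1}^{d} sᵢhᵢ ≠ 0. -/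

import Mathlib

/-- The set of torsion elements of an additive group. -/
def addTorsionSet (Q : Type*) [AddGroup Q] : Set Q := {x | ∃ n : ℕ, 0 < n ∧ n • x = 0}

/-- Coefficientwise cast `ℤG → ℚG` of group-ring elements. -/
noncomputable def intCastMA (G : Type*) (x : MonoidAlgebra ℤ G) : MonoidAlgebra ℚ G :=
  MonoidAlgebra.ofCoeff (Finsupp.mapRange (fun n : ℤ => (n : ℚ)) Int.cast_zero x.coeff)


lemma intCastMA_apply {G : Type*} (a : MonoidAlgebra ℤ G) (g : G) :
    (intCastMA G a).coeff g = ((a.coeff g : ℤ) : ℚ) := by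
  simp [intCastMA]

lemma intCastMA_zero (G : Type*) : intCastMA G (0 : MonoidAlgebra ℤ G) = 0 := by
  ext g; simp [intCastMA]

lemma intCastMA_add (G : Type*) (a b : MonoidAlgebra ℤ G) :
    intCastMA G (a + b) = intCastMA G a + intCastMA G b := by
  ext g; simp [intCastMA]

lemma intCastMA_single (G : Type*) (g : G) (n : ℤ) :
    intCastMA G (MonoidAlgebra.single g n) = MonoidAlgebra.single g (n : ℚ) := by
  ext g'; simp [intCastMA, MonoidAlgebra.coeff_single, Finsupp.single_apply]

lemma intCastMA_nsmul (G : Type*) (k : ℕ) (a : MonoidAlgebra ℤ G) :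
    intCastMA G (k • a) = (k : ℚ) • intCastMA G a := by
  induction k with
  | zero => simp [intCastMA_zero]
  | succ n ih =>
      rw [succ_nsmul, intCastMA_add, ih]
      push_cast
      rw [add_smul, one_smul]

lemma exists_intCast_smul {G : Type*} (q : MonoidAlgebra ℚ G) :
    ∃ (N : ℕ) (s : MonoidAlgebra ℤ G), 0 < N ∧ intCastMA G s = (N : ℚ) • q := by
  classical
  set N : ℕ := ∏ g ∈ q.coeff.support, (q.coeff g).den with hN
  have hNpos : 0 < N := Finset.prod_pos fun g _ => (q.coeff g).pos
  have key : ∀ g : G, (((N : ℚ) * q.coeff g).num : ℚ) = (N : ℚ) * q.coeff g := by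
    intro g
    by_cases hg : g ∈ q.coeff.support
    · have hdvd : (q.coeff g).den ∣ N := Finset.dvd_prod_of_mem _ hg
      obtain ⟨k, hk⟩ := hdvd
      have h2 : (N : ℚ) * q.coeff g = ((k * (q.coeff g).num : ℤ) : ℚ) := by
        rw [hk]
        push_cast
        rw [mul_comm ((q.coeff g).den : ℚ) (k : ℚ), mul_assoc, Rat.den_mul_eq_num]
      rw [h2, Rat.num_intCast]
    · have : q.coeff g = 0 := Finsupp.notMem_support_iff.mp hg
      simp [this]
  refine ⟨N, MonoidAlgebra.ofCoeff (Finsupp.mapRange (fun a => ((N : ℚ) * a).num) (by simp) q.coeff), hNpos, ?_⟩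
  ext g
  have h1 : ((N : ℚ) • q).coeff g = (N : ℚ) * q.coeff g := by
    rw [MonoidAlgebra.coeff_smul_apply, smul_eq_mul]
  rw [intCastMA_apply, MonoidAlgebra.coeff_ofCoeff, Finsupp.mapRange_apply, h1]
  exact key g

lemma exists_intCast_smul_vec {G : Type*} {d : ℕ} (t : Fin d → MonoidAlgebra ℚ G) :
    ∃ (N : ℕ) (s : Fin d → MonoidAlgebra ℤ G), 0 < N ∧
      ∀ i, intCastMA G (s i) = (N : ℚ) • t i := by
  classical
  choose N s hpos hs using fun i => exists_intCast_smul (t i)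
  refine ⟨∏ i, N i, fun i => ((∏ j, N j) / N i) • s i, Finset.prod_pos fun i _ => hpos i, ?_⟩
  intro i
  rw [intCastMA_nsmul, hs i, smul_smul]
  congr 1
  rw [← Nat.cast_mul, Nat.div_mul_cancel (Finset.dvd_prod_of_mem _ (Finset.mem_univ i))]

open MulOpposite

section idem
variable {R : Type*} [Ring R]

lemma exists_right_one_of_twosided [IsSemisimpleRing R] (A : Submodule R R)
    (hA : ∀ a ∈ A, ∀ r : R, a * r ∈ A) : ∃ e ∈ A, ∀ a ∈ A, a * e = a := by
  obtain ⟨B, hB⟩ := exists_isCompl A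
  have h1 : (1 : R) ∈ A ⊔ B := by rw [hB.sup_eq_top]; trivial
  obtain ⟨e, he, f, hf, hef⟩ := Submodule.mem_sup.mp h1
  refine ⟨e, he, fun a ha => ?_⟩
  have haf : a * f ∈ A := hA a ha f
  have haf' : a * f ∈ B := B.smul_mem a hf
  have : a * f = 0 := by
    have := hB.disjoint.le_bot ⟨haf, haf'⟩
    simpa using this
  have : a * e + a * f = a := by rw [← mul_add, hef, mul_one]
  rw [‹a * f = 0›, add_zero] at this
  exact this

end idem

section maInv
variable (G : Type*) [Group G]

/-- The antipode `g ↦ g⁻¹` on a rational group algebra, as an additive map. -/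
noncomputable def maInv : MonoidAlgebra ℚ G ≃+ MonoidAlgebra ℚ G :=
  (MonoidAlgebra.mapDomainLinearEquiv ℚ ℚ (Equiv.inv G)).toAddEquiv

variable {G}

lemma maInv_single (g : G) (a : ℚ) :
    maInv G (MonoidAlgebra.single g a) = MonoidAlgebra.single g⁻¹ a := by
  simp [maInv]

lemma maInv_maInv (x : MonoidAlgebra ℚ G) : maInv G (maInv G x) = x := by
  ext g
  simp [maInv, Finsupp.equivMapDomain_apply]

lemma maInv_mul (x y : MonoidAlgebra ℚ G) :
    maInv G (x * y) = maInv G y * maInv G x := by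
  induction x using MonoidAlgebra.induction_linear with
  | zero => simp
  | add a b ha hb => rw [add_mul, map_add, ha, hb, map_add, mul_add]
  | single g a =>
      induction y using MonoidAlgebra.induction_linear with
      | zero => simp
      | add a' b' ha hb => rw [mul_add, map_add, ha, hb, map_add, add_mul]
      | single g' a' =>
          rw [MonoidAlgebra.single_mul_single, maInv_single, maInv_single, maInv_single,
            MonoidAlgebra.single_mul_single, mul_inv_rev, mul_comm a a']

lemma isSemisimpleRing_ma (G : Type*) [Group G] [Finite G] :
    IsSemisimpleRing (MonoidAlgebra ℚ G) := by
  let G' := Shrink.{0} G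
  haveI : Finite G' := Finite.of_equiv G (equivShrink.{0} G)
  haveI : Fintype G' := Fintype.ofFinite _
  haveI : NeZero ((Fintype.card G' : ℚ)) := ⟨Nat.cast_ne_zero.2 Fintype.card_ne_zero⟩
  exact (MonoidAlgebra.domCongr ℚ ℚ (Shrink.mulEquiv : G' ≃* G)).toRingEquiv.isSemisimpleRing

/-- A two-sided ideal of `ℚG` contains a central element acting as identity on it. -/
lemma exists_central_idem [Finite G] (A : Submodule (MonoidAlgebra ℚ G) (MonoidAlgebra ℚ G))
    (hA : ∀ a ∈ A, ∀ r, a * r ∈ A) :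
    ∃ e, e ∈ A ∧ (∀ a ∈ A, a * e = a) ∧ (∀ a ∈ A, e * a = a) ∧ ∀ r, e * r = r * e := by
  haveI := isSemisimpleRing_ma G
  obtain ⟨e₁, he₁, hre₁⟩ := exists_right_one_of_twosided A hA
  let A' : Submodule (MonoidAlgebra ℚ G) (MonoidAlgebra ℚ G) :=
    { carrier := {r | maInv G r ∈ A}
      add_mem' := fun {a b} ha hb => by
        simp only [Set.mem_setOf_eq, map_add] at *; exact A.add_mem ha hb
      zero_mem' := by simp only [Set.mem_setOf_eq, map_zero]; exact A.zero_mem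
      smul_mem' := fun c {x} hx => by
        simp only [Set.mem_setOf_eq, smul_eq_mul, maInv_mul] at *
        exact hA _ hx _ }
  have hA' : ∀ a ∈ A', ∀ r, a * r ∈ A' := by
    intro a ha r
    show maInv G (a * r) ∈ A
    rw [maInv_mul]
    exact A.smul_mem _ ha
  obtain ⟨e₂', he₂', hre₂'⟩ := exists_right_one_of_twosided A' hA'
  set e₂ := maInv G e₂' with he₂def
  have he₂ : e₂ ∈ A := he₂'
  have hle₂ : ∀ a ∈ A, e₂ * a = a := by
    intro a ha
    have h1 : maInv G a ∈ A' := by show maInv G (maInv G a) ∈ A; rwa [maInv_maInv]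
    have h2 := hre₂' (maInv G a) h1
    have := congrArg (maInv G) h2
    rwa [maInv_mul, maInv_maInv] at this
  have heq : e₁ = e₂ := by
    have h1 := hre₁ e₂ he₂
    have h2 := hle₂ e₁ he₁
    rw [← h1, h2]
  refine ⟨e₁, he₁, hre₁, by rw [heq]; exact hle₂, fun r => ?_⟩
  have h1 : e₁ * r ∈ A := hA e₁ he₁ r
  have h2 : r * e₁ ∈ A := A.smul_mem r he₁
  calc e₁ * r = e₁ * r * e₁ := (hre₁ _ h1).symm
    _ = e₂ * (r * e₁) := by rw [heq, mul_assoc]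
    _ = r * e₁ := hle₂ _ h2

end maInv

lemma iota_smul {G : Type*} [Group G] {M : Type*} [AddCommGroup M]
    [Module (MonoidAlgebra ℤ G) M]
    {𝓜 : Type*} [AddCommGroup 𝓜] [Module ℚ 𝓜] [Module (MonoidAlgebra ℚ G) 𝓜]
    [IsScalarTower ℚ (MonoidAlgebra ℚ G) 𝓜]
    (ι : M →+ 𝓜)
    (hequiv : ∀ (g : G) (x : M),
      ι (MonoidAlgebra.of ℤ G g • x) = MonoidAlgebra.of ℚ G g • ι x)
    (s : MonoidAlgebra ℤ G) (x : M) :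
    ι (s • x) = intCastMA G s • ι x := by
  induction s using MonoidAlgebra.induction_linear with
  | zero =>
      have : (0 : MonoidAlgebra ℤ G) • x = 0 := zero_smul _ x
      rw [this, map_zero, intCastMA_zero, zero_smul]
  | add a b ha hb => rw [add_smul, map_add, ha, hb, intCastMA_add, add_smul]
  | single g n =>
      have h1 : (MonoidAlgebra.single g n : MonoidAlgebra ℤ G)
          = (n : MonoidAlgebra ℤ G) * MonoidAlgebra.of ℤ G g := by
        rw [MonoidAlgebra.intCast_def, MonoidAlgebra.of_apply,
          MonoidAlgebra.single_mul_single, one_mul, mul_one]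
        simp
      have h2 : intCastMA G (MonoidAlgebra.single g n)
          = (n : MonoidAlgebra ℚ G) * MonoidAlgebra.of ℚ G g := by
        rw [intCastMA_single, MonoidAlgebra.intCast_def, MonoidAlgebra.of_apply,
          MonoidAlgebra.single_mul_single, one_mul, mul_one]
      rw [h2, h1, mul_smul, mul_smul, Int.cast_smul_eq_zsmul, Int.cast_smul_eq_zsmul,
        map_zsmul, hequiv]

lemma moduleFinite_maQ (G : Type*) [Finite G] :
    Module.Finite ℚ (MonoidAlgebra ℚ G) := by
  haveI : Fintype G := Fintype.ofFinite G
  exact Module.Finite.equiv ((MonoidAlgebra.coeffLinearEquiv ℚ).trans (Finsupp.linearEquivFunOnFinite ℚ ℚ G)).symm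

lemma moduleFinite_maZ (G : Type*) [Finite G] :
    Module.Finite ℤ (MonoidAlgebra ℤ G) := by
  haveI : Fintype G := Fintype.ofFinite G
  exact Module.Finite.equiv ((MonoidAlgebra.coeffLinearEquiv ℤ).trans (Finsupp.linearEquivFunOnFinite ℤ ℤ G)).symm

/-- Proposition: let `G` be a finite group, `M` a finitely generated `ℤG`-module that is
`ℤ`-torsion-free, and `m₁, …, m_d ∈ M` generators of a `ℤG`-submodule `U` of infinite
index in `M`; assume `𝓜 := M ⊗_ℤ ℚ` (realized as any `ℚG`-module containing `M` via
`ι : m ↦ 1 ⊗ m` with `𝓜 = ℚ·ι(M)`) is `d`-generated as a `ℚG`-module. Let `𝓥` be a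
`ℚG`-module complement of `𝓤 := U ⊗ ℚ` in `𝓜`, and `V := M ∩ 𝓥`. Then there exist
`h₁, …, h_d ∈ V` and a tuple `(s₁, …, s_d) ∈ L := ker f ∩ (ℤG)^{(d)}` — where
`f : (ℚG)^{(d)} → 𝓜` is `f(r₁, …, r_d) = ∑ᵢ rᵢ mᵢ` — such that `∑ᵢ sᵢ hᵢ ≠ 0`. -/
theorem exists_nonzero_combination_in_complement
    (G : Type*) [Group G] [Finite G]
    (M : Type*) [AddCommGroup M] [Module (MonoidAlgebra ℤ G) M]
    [Module.Finite (MonoidAlgebra ℤ G) M] [NoZeroSMulDivisors ℤ M]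
    (𝓜 : Type*) [AddCommGroup 𝓜] [Module ℚ 𝓜] [Module (MonoidAlgebra ℚ G) 𝓜]
    [IsScalarTower ℚ (MonoidAlgebra ℚ G) 𝓜]
    (ι : M →+ 𝓜) (hinj : Function.Injective ι)
    (hequiv : ∀ (g : G) (x : M),
      ι (MonoidAlgebra.of ℤ G g • x) = MonoidAlgebra.of ℚ G g • ι x)
    (hdiv : ∀ y : 𝓜, ∃ (c : ℤ) (x : M), c ≠ 0 ∧ (c : ℚ) • y = ι x)
    (d : ℕ)
    (hgen : ∃ y : Fin d → 𝓜, Submodule.span (MonoidAlgebra ℚ G) (Set.range y) = ⊤)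
    (m : Fin d → M)
    (hU : Infinite (M ⧸ Submodule.span (MonoidAlgebra ℤ G) (Set.range m)))
    (𝓥 : Submodule (MonoidAlgebra ℚ G) 𝓜)
    (hcompl : IsCompl
      (Submodule.span (MonoidAlgebra ℚ G) (Set.range fun i => ι (m i))) 𝓥) :
    ∃ (h : Fin d → M) (s : Fin d → MonoidAlgebra ℤ G),
      (∀ i, ι (h i) ∈ 𝓥) ∧
      (∑ i, intCastMA G (s i) • ι (m i) = 0) ∧
      ∑ i, s i • h i ≠ 0 := by
  classical
  haveI : Fintype G := Fintype.ofFinite G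
  by_contra hcon
  push_neg at hcon
  set R := MonoidAlgebra ℚ G with hRdef
  set 𝓤 := Submodule.span R (Set.range fun i => ι (m i)) with h𝓤
  -- ℚ-scalars commute with R-scalars on 𝓜
  have hqr : ∀ (q : ℚ) (r : R) (v : 𝓜), r • (q • v) = q • (r • v) := by
    intro q r v
    calc r • (q • v) = r • ((q • (1 : R)) • v) := by rw [smul_assoc, one_smul]
      _ = (r * (q • (1 : R))) • v := (mul_smul _ _ _).symm
      _ = (q • (r * 1)) • v := by rw [mul_smul_comm]
      _ = (q • r) • v := by rw [mul_one]
      _ = q • (r • v) := smul_assoc q r v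
  have hQmem : ∀ (q : ℚ) (v : 𝓜), v ∈ 𝓥 → q • v ∈ 𝓥 := by
    intro q v hv
    have h1 : q • v = (q • (1 : R)) • v := by rw [smul_assoc, one_smul]
    rw [h1]; exact 𝓥.smul_mem _ hv
  -- key annihilation property derived from `hcon`
  have hann : ∀ (r : Fin d → R), (∑ i, r i • ι (m i)) = 0 →
      ∀ j, ∀ v ∈ 𝓥, r j • v = 0 := by
    intro r hrel j v hv
    obtain ⟨c, x, hc, hcx⟩ := hdiv v
    obtain ⟨N, s, hN, hs⟩ := exists_intCast_smul_vec r
    have hxV : ι x ∈ 𝓥 := hcx ▸ hQmem _ _ hv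
    set h : Fin d → M := fun i => if i = j then x else 0 with hh
    have hmem : ∀ i, ι (h i) ∈ 𝓥 := by
      intro i
      by_cases hij : i = j
      · simpa [hh, hij] using hxV
      · simp [hh, hij]
    have hrel2 : ∑ i, intCastMA G (s i) • ι (m i) = 0 := by
      have h1 : ∀ i, intCastMA G (s i) • ι (m i) = (N : ℚ) • (r i • ι (m i)) := by
        intro i; rw [hs i, smul_assoc]
      rw [Finset.sum_congr rfl fun i _ => h1 i, ← Finset.smul_sum, hrel, smul_zero]
    have hzero := hcon h s hmem hrel2
    have hsx : s j • x = 0 := by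
      have h1 : ∑ i, s i • h i = s j • x := by
        rw [hh]
        rw [Finset.sum_eq_single j]
        · simp
        · intro b _ hb; simp [hb]
        · intro hj; exact absurd (Finset.mem_univ j) hj
      rw [← h1]; exact hzero
    have h1 : intCastMA G (s j) • ι x = 0 := by
      rw [← iota_smul ι hequiv, hsx, map_zero]
    rw [hs j] at h1
    have h2 : (N : ℚ) • (r j • ι x) = 0 := by rw [← smul_assoc]; exact h1
    have hN0 : (N : ℚ) ≠ 0 := Nat.cast_ne_zero.2 hN.ne'
    have h3 : r j • ι x = 0 := by
      have h4 := congrArg (fun z => (N : ℚ)⁻¹ • z) h2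
      simpa [smul_smul, inv_mul_cancel₀ hN0] using h4
    have h5 : (c : ℚ) • (r j • v) = 0 := by rw [← hqr, hcx]; exact h3
    have hc0 : (c : ℚ) ≠ 0 := Int.cast_ne_zero.2 hc
    have h6 := congrArg (fun z => (c : ℚ)⁻¹ • z) h5
    simpa [smul_smul, inv_mul_cancel₀ hc0] using h6
  -- the annihilator of 𝓥 and its central unit
  set A : Submodule R R :=
    { carrier := {r : R | ∀ v ∈ 𝓥, r • v = 0}
      add_mem' := fun {a b} ha hb v hv => by rw [add_smul, ha v hv, hb v hv, add_zero]
      zero_mem' := fun v _ => zero_smul _ v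
      smul_mem' := fun c {x} hx v hv => by
        rw [smul_eq_mul, mul_smul, hx v hv, smul_zero] } with hAdef
  have hAmem : ∀ r : R, r ∈ A ↔ ∀ v ∈ 𝓥, r • v = 0 := fun r => Iff.rfl
  have hA2 : ∀ a ∈ A, ∀ r, a * r ∈ A := by
    intro a ha r v hv
    rw [mul_smul]
    exact ha _ (𝓥.smul_mem r hv)
  obtain ⟨e, heA, hre, hle, hcent⟩ := exists_central_idem A hA2
  -- 𝓥 is nonzero
  have hVne : 𝓥 ≠ ⊥ := by
    intro hbot
    have htop : 𝓤 = ⊤ := by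
      have h := hcompl.codisjoint
      rw [hbot, codisjoint_bot] at h
      exact h
    set U := Submodule.span (MonoidAlgebra ℤ G) (Set.range m) with hUdef
    haveI : Module.Finite ℤ (MonoidAlgebra ℤ G) := moduleFinite_maZ G
    haveI : Module.Finite ℤ M := Module.Finite.trans (MonoidAlgebra ℤ G) M
    haveI : Module.Finite ℤ (M ⧸ U) :=
      Module.Finite.of_surjective (U.mkQ.restrictScalars ℤ) (Submodule.mkQ_surjective U)
    have htor : Module.IsTorsion ℤ (M ⧸ U) := by
      intro q
      obtain ⟨x, rfl⟩ := Submodule.Quotient.mk_surjective U q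
      have hx : ι x ∈ 𝓤 := htop ▸ Submodule.mem_top
      rw [h𝓤] at hx
      obtain ⟨t, ht⟩ := (Submodule.mem_span_range_iff_exists_fun R).mp hx
      obtain ⟨N, s, hN, hs⟩ := exists_intCast_smul_vec t
      have key : ι (∑ i, s i • m i) = ι (N • x) := by
        rw [map_sum, map_nsmul]
        calc ∑ i, ι (s i • m i) = ∑ i, (N : ℚ) • (t i • ι (m i)) := by
              refine Finset.sum_congr rfl fun i _ => ?_
              rw [iota_smul ι hequiv, hs i, smul_assoc]
          _ = (N : ℚ) • ∑ i, t i • ι (m i) := by rw [Finset.smul_sum]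
          _ = (N : ℚ) • ι x := by rw [ht]
          _ = N • ι x := by rw [Nat.cast_smul_eq_nsmul]
      have hNx : N • x ∈ U := by
        rw [← hinj key]
        exact Submodule.sum_mem _ fun i _ =>
          U.smul_mem (s i) (Submodule.subset_span ⟨i, rfl⟩)
      refine ⟨⟨(N : ℤ), mem_nonZeroDivisors_of_ne_zero (by exact_mod_cast hN.ne')⟩, ?_⟩
      show (N : ℤ) • (Submodule.Quotient.mk x : M ⧸ U) = 0
      have hmk : (N : ℤ) • (Submodule.Quotient.mk x : M ⧸ U)
          = Submodule.Quotient.mk ((N : ℤ) • x) :=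
        (map_zsmul (U.mkQ.toAddMonoidHom) (N : ℤ) x).symm
      rw [hmk]
      rw [Submodule.Quotient.mk_eq_zero]
      rwa [natCast_zsmul]
    haveI := Module.finite_of_fg_torsion (M ⧸ U) htor
    haveI := hU
    exact not_finite (M ⧸ U)
  -- the counting argument
  obtain ⟨y, hy⟩ := hgen
  set f1 : R := 1 - e with hf1
  have hee : e * e = e := hre e heA
  have hf1e : ∀ r : R, r * f1 * e = 0 := by
    intro r
    rw [mul_assoc, hf1, sub_mul, one_mul, hee, sub_self, mul_zero]
  have hf1c : ∀ r : R, f1 * r = r * f1 := by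
    intro r
    rw [hf1, sub_mul, mul_sub, one_mul, mul_one, hcent r]
  haveI : Module.Finite ℚ R := moduleFinite_maQ G
  haveI : Module.Finite R 𝓜 :=
    ⟨Submodule.fg_def.mpr ⟨Set.range y, Set.finite_range y, hy⟩⟩
  haveI : Module.Finite ℚ 𝓜 := Module.Finite.trans R 𝓜
  set Φ : (Fin d → R) →ₗ[ℚ] 𝓜 :=
    { toFun := fun t => ∑ i, (t i * f1) • ι (m i)
      map_add' := fun a b => by
        simp [add_mul, add_smul, Finset.sum_add_distrib]
      map_smul' := fun q t => by
        simp [smul_mul_assoc, smul_assoc, Finset.smul_sum] } with hΦ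
  set Ψ : (Fin d → R) →ₗ[ℚ] 𝓜 :=
    { toFun := fun t => ∑ i, (f1 * t i) • y i
      map_add' := fun a b => by
        simp [mul_add, add_smul, Finset.sum_add_distrib]
      map_smul' := fun q t => by
        simp [mul_smul_comm, smul_assoc, Finset.smul_sum] } with hΨ
  have hsurj : ∀ z : 𝓜, ∃ t' : Fin d → R, ∑ i, t' i • y i = z := by
    intro z
    have hz : z ∈ Submodule.span R (Set.range y) := hy ▸ Submodule.mem_top
    exact (Submodule.mem_span_range_iff_exists_fun R).mp hz
  have hker : LinearMap.ker Φ ≤ LinearMap.ker Ψ := by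
    intro t ht
    have h0 : ∑ i, (t i * f1) • ι (m i) = 0 := ht
    have hz : ∀ i, t i * f1 = 0 := by
      intro i
      have hiA : (t i * f1) ∈ A := hann _ h0 i
      calc t i * f1 = t i * f1 * e := (hre _ hiA).symm
        _ = 0 := hf1e _
    show Ψ t = 0
    show ∑ i, (f1 * t i) • y i = 0
    have h1 : ∀ i, f1 * t i = 0 := fun i => by rw [hf1c, hz i]
    simp [h1]
  have hrange : LinearMap.range Φ ≤ LinearMap.range Ψ := by
    rintro _ ⟨t, rfl⟩
    obtain ⟨t', ht'⟩ := hsurj (∑ i, t i • ι (m i))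
    refine ⟨t', ?_⟩
    show ∑ i, (f1 * t' i) • y i = ∑ i, (t i * f1) • ι (m i)
    calc ∑ i, (f1 * t' i) • y i = f1 • ∑ i, t' i • y i := by
          rw [Finset.smul_sum]
          exact Finset.sum_congr rfl fun i _ => mul_smul f1 (t' i) (y i)
      _ = f1 • ∑ i, t i • ι (m i) := by rw [ht']
      _ = ∑ i, (t i * f1) • ι (m i) := by
          rw [Finset.smul_sum]
          refine Finset.sum_congr rfl fun i _ => ?_
          rw [← mul_smul, hf1c]
  have hfr : Module.finrank ℚ (LinearMap.range Ψ) ≤ Module.finrank ℚ (LinearMap.range Φ) := by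
    have h1 := LinearMap.finrank_range_add_finrank_ker Φ
    have h2 := LinearMap.finrank_range_add_finrank_ker Ψ
    have h3 : Module.finrank ℚ (LinearMap.ker Φ) ≤ Module.finrank ℚ (LinearMap.ker Ψ) :=
      Submodule.finrank_mono hker
    omega
  have heqr : LinearMap.range Φ = LinearMap.range Ψ :=
    Submodule.eq_of_le_of_finrank_le hrange hfr
  apply hVne
  rw [eq_bot_iff]
  intro v hv
  have hev : e • v = 0 := heA v hv
  have hfv : f1 • v = v := by rw [hf1, sub_smul, one_smul, hev, sub_zero]
  obtain ⟨t', ht'⟩ := hsurj v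
  have hvr : v ∈ LinearMap.range Ψ := by
    refine ⟨t', ?_⟩
    show ∑ i, (f1 * t' i) • y i = v
    calc ∑ i, (f1 * t' i) • y i = f1 • ∑ i, t' i • y i := by
          rw [Finset.smul_sum]
          exact Finset.sum_congr rfl fun i _ => mul_smul f1 (t' i) (y i)
      _ = f1 • v := by rw [ht']
      _ = v := hfv
  rw [← heqr] at hvr
  obtain ⟨t, ht⟩ := hvr
  have hvU : v ∈ 𝓤 := by
    rw [← ht]
    show ∑ i, (t i * f1) • ι (m i) ∈ 𝓤
    exact Submodule.sum_mem _ fun i _ =>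
      𝓤.smul_mem _ (Submodule.subset_span ⟨i, rfl⟩)
  exact hcompl.disjoint.le_bot ⟨hvU, hv⟩
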